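/- With the notation above, let φ^a_t(0) be the flow of x' = b(x)+a started at 0. Then γ(a)^{-1} = ∫_0^∞ exp(-∫_0^t f(φ^a_u(0)) du) dt; in particular a ↦ γ(a) is non-decreasing. -/

import Mathlib

open MeasureTheory

/-- The (unnormalized) density of the invariant measure: `(b x + a)⁻¹ exp(-∫_0^x f/(b+a))`. -/
noncomputable def invDensityBase (b f : ℝ → ℝ) (a x : ℝ) : ℝ :=
  (b x + a)⁻¹ * Real.exp (-∫ y in (0:ℝ)..x, f y / (b y + a))

/-- The support region `[0, σ_a)` where `σ_a = inf {x ≥ 0 : b x + a = 0}`. -/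
def supportSet (b : ℝ → ℝ) (a : ℝ) : Set ℝ :=
  {x : ℝ | 0 ≤ x ∧ ∀ y ∈ Set.Icc 0 x, 0 < b y + a}

/-- The normalization constant `γ(a)`. -/
noncomputable def gammaConst (b f : ℝ → ℝ) (a : ℝ) : ℝ :=
  (∫ x in supportSet b a, invDensityBase b f a x)⁻¹

section Aux

open Set Filter Topology

variable {b : ℝ → ℝ} {a : ℝ} {g : ℝ → ℝ}

lemma flow_contOn (hgd : ∀ t ≥ (0:ℝ), HasDerivAt g (b (g t) + a) t) :
    ContinuousOn g (Set.Ici 0) := fun t ht =>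
  ((hgd t ht).continuousAt).continuousWithinAt

/-- Along the flow, `b (g t) + a` stays positive. -/
lemma flow_pos (hb_lip : LocallyLipschitz b) (hb0 : 0 < b 0) (ha : 0 ≤ a)
    (hg0 : g 0 = 0) (hgd : ∀ t ≥ (0:ℝ), HasDerivAt g (b (g t) + a) t) :
    ∀ t ≥ (0:ℝ), 0 < b (g t) + a := by
  have hgc : ContinuousOn g (Set.Ici 0) := flow_contOn hgd
  have hqc : ContinuousOn (fun t => b (g t) + a) (Set.Ici 0) :=
    ((hb_lip.continuous.comp_continuousOn hgc).add continuousOn_const)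
  by_contra h
  push_neg at h
  obtain ⟨τ, hτ0, hτ⟩ := h
  set T : Set ℝ := Icc 0 τ ∩ (fun t => b (g t) + a) ⁻¹' Iic 0 with hT
  have hTclosed : IsClosed T :=
    (hqc.mono Icc_subset_Ici_self).preimage_isClosed_of_isClosed isClosed_Icc isClosed_Iic
  have hTne : T.Nonempty := ⟨τ, ⟨hτ0, le_rfl⟩, hτ⟩
  have hTbdd : BddBelow T := ⟨0, fun t ht => ht.1.1⟩
  set τ₀ := sInf T with hτ₀def
  have hmem : τ₀ ∈ T := hTclosed.csInf_mem hTne hTbdd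
  have hτ₀0 : 0 ≤ τ₀ := hmem.1.1
  have hτ₀pos : 0 < τ₀ := by
    rcases hτ₀0.lt_or_eq with h' | h'
    · exact h'
    · exfalso
      have : b (g 0) + a ≤ 0 := by rw [← h'] at hmem; exact hmem.2
      rw [hg0] at this
      linarith
  have hpos_lt : ∀ t ∈ Ico (0:ℝ) τ₀, 0 < b (g t) + a := by
    intro t ht
    by_contra hle
    push_neg at hle
    have : t ∈ T := ⟨⟨ht.1, ht.2.le.trans hmem.1.2⟩, hle⟩
    exact absurd (csInf_le hTbdd this) (not_le.mpr ht.2)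
  have hq0 : b (g τ₀) + a = 0 := by
    refine le_antisymm hmem.2 ?_
    have hcat : ContinuousAt (fun t => b (g t) + a) τ₀ :=
      (hb_lip.continuous.continuousAt).comp (hgd τ₀ hτ₀0).continuousAt |>.add continuousAt_const
    have hne : (𝓝[Ico (0:ℝ) τ₀] τ₀).NeBot := by
      apply mem_closure_iff_nhdsWithin_neBot.mp
      rw [closure_Ico (ne_of_lt hτ₀pos)]
      exact ⟨hτ₀0, le_rfl⟩
    refine ge_of_tendsto ((hcat.continuousWithinAt (s := Ico (0:ℝ) τ₀)).tendsto) ?_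
    exact eventually_nhdsWithin_of_forall (fun t ht => (hpos_lt t ht).le)
  -- g is strictly monotone on [0, τ₀]
  have hmono : StrictMonoOn g (Icc 0 τ₀) := by
    refine strictMonoOn_of_deriv_pos (convex_Icc 0 τ₀)
      (hgc.mono (Icc_subset_Ici_self)) ?_
    intro x hx
    rw [interior_Icc] at hx
    rw [(hgd x hx.1.le).deriv]
    exact hpos_lt x ⟨hx.1.le, hx.2⟩
  -- Lipschitz neighborhood of x* := g τ₀
  obtain ⟨K, U, hU, hK⟩ := hb_lip (g τ₀)
  obtain ⟨r, hr, hball⟩ := Metric.mem_nhds_iff.mp hU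
  have hcg : ContinuousAt g τ₀ := (hgd τ₀ hτ₀0).continuousAt
  obtain ⟨δ, hδ, hδ'⟩ := Metric.continuousAt_iff.mp hcg r hr
  set s := max 0 (τ₀ - δ/2) with hs
  have hs0 : 0 ≤ s := le_max_left _ _
  have hsτ : s < τ₀ := max_lt hτ₀pos (by linarith)
  have hmemU : ∀ t ∈ Icc s τ₀, g t ∈ U := by
    intro t ht
    apply hball
    rw [Metric.mem_ball]
    apply hδ'
    rw [Real.dist_eq, abs_sub_lt_iff]
    constructor
    · linarith [ht.2]
    · have : τ₀ - δ/2 ≤ s := le_max_right _ _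
      have := ht.1
      linarith
  -- Gronwall on u t = g (τ₀ - t) - g τ₀
  have key : ∀ x ∈ Icc (0:ℝ) (τ₀ - s), ‖g (τ₀ - x) - g τ₀‖ ≤ gronwallBound 0 K 0 (x - 0) := by
    apply norm_le_gronwallBound_of_norm_deriv_right_le
      (f' := fun t => -(b (g (τ₀ - t)) + a))
    · -- continuity
      have h1 : ContinuousOn (fun t : ℝ => τ₀ - t) (Icc 0 (τ₀ - s)) :=
        (continuous_const.sub continuous_id).continuousOn
      have h2 : MapsTo (fun t : ℝ => τ₀ - t) (Icc 0 (τ₀ - s)) (Ici 0) := by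
        intro t ht
        simp only [mem_Ici]
        have := ht.2
        linarith [hs0]
      exact ((hgc.comp h1 h2).sub continuousOn_const)
    · intro x hx
      have hx2 : τ₀ - x ∈ Ici (0:ℝ) := by
        simp only [mem_Ici]; have := hx.2; linarith [hs0]
      have hinner : HasDerivAt (fun t : ℝ => τ₀ - t) (-1) x :=
        (hasDerivAt_id x).const_sub τ₀
      have hcomp : HasDerivAt (fun t => g (τ₀ - t)) ((b (g (τ₀ - x)) + a) * (-1)) x :=
        (hgd (τ₀ - x) hx2).comp x hinner
      have : HasDerivAt (fun t => g (τ₀ - t) - g τ₀) (-(b (g (τ₀ - x)) + a)) x := by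
        simpa [mul_neg_one] using hcomp.sub_const (g τ₀)
      exact this.hasDerivWithinAt
    · simp
    · intro x hx
      have hx2 : τ₀ - x ∈ Icc s τ₀ := by
        constructor <;> [skip; skip]
        · have := hx.2.le; linarith
        · have := hx.1; linarith
      have hyU : g (τ₀ - x) ∈ U := hmemU _ hx2
      have hxU : g τ₀ ∈ U := hmemU τ₀ ⟨hsτ.le, le_rfl⟩
      have hdist := hK.dist_le_mul (g (τ₀ - x)) hyU (g τ₀) hxU
      rw [Real.dist_eq, Real.dist_eq] at hdist
      have heq : b (g (τ₀ - x)) + a = b (g (τ₀ - x)) - b (g τ₀) := by linarith [hq0]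
      rw [Real.norm_eq_abs, Real.norm_eq_abs, abs_neg, heq]
      calc |b (g (τ₀ - x)) - b (g τ₀)| ≤ K * |g (τ₀ - x) - g τ₀| := hdist
        _ ≤ K * |g (τ₀ - x) - g τ₀| + 0 := by linarith
  have hfinal := key (τ₀ - s) ⟨by linarith, le_rfl⟩
  rw [gronwallBound_ε0_δ0] at hfinal
  have : g (τ₀ - (τ₀ - s)) - g τ₀ = 0 := by
    rwa [norm_le_zero_iff] at hfinal
  have hlt : g s < g τ₀ := hmono ⟨hs0, hsτ.le⟩ ⟨hτ₀0, le_rfl⟩ hsτ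
  simp only [sub_sub_cancel] at this
  linarith [sub_eq_zero.mp this ▸ hlt]

lemma flow_strictMono (hpos : ∀ t ≥ (0:ℝ), 0 < b (g t) + a)
    (hgd : ∀ t ≥ (0:ℝ), HasDerivAt g (b (g t) + a) t) :
    StrictMonoOn g (Set.Ici 0) := by
  refine strictMonoOn_of_deriv_pos (convex_Ici 0) (flow_contOn hgd) ?_
  intro x hx
  rw [interior_Ici] at hx
  rw [(hgd x hx.le).deriv]
  exact hpos x hx.le

lemma flow_nonneg (hpos : ∀ t ≥ (0:ℝ), 0 < b (g t) + a)
    (hg0 : g 0 = 0)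
    (hgd : ∀ t ≥ (0:ℝ), HasDerivAt g (b (g t) + a) t) :
    ∀ t ≥ (0:ℝ), 0 ≤ g t := by
  intro t ht
  have := (flow_strictMono hpos hgd).monotoneOn self_mem_Ici ht ht
  rwa [hg0] at this

lemma inner_subst {f : ℝ → ℝ} (hf_cont : ContinuousOn f (Set.Ici 0))
    (hb_cont : Continuous b)
    (hpos : ∀ t ≥ (0:ℝ), 0 < b (g t) + a)
    (hg0 : g 0 = 0)
    (hgd : ∀ t ≥ (0:ℝ), HasDerivAt g (b (g t) + a) t)
    {t : ℝ} (ht : 0 ≤ t) :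
    ∫ y in (0:ℝ)..(g t), f y / (b y + a) = ∫ u in (0:ℝ)..t, f (g u) := by
  have hgc := flow_contOn hgd
  have hnn := flow_nonneg hpos hg0 hgd
  have huIcc : Set.uIcc (0:ℝ) t = Set.Icc 0 t := Set.uIcc_of_le ht
  have himg : g '' Set.uIcc 0 t ⊆ Set.Ici 0 := by
    rintro y ⟨u, hu, rfl⟩
    rw [huIcc] at hu
    exact hnn u hu.1
  have key := intervalIntegral.integral_comp_smul_deriv' (a := (0:ℝ)) (b := t) (f := g)
      (f' := fun u => b (g u) + a) (g := fun y => f y / (b y + a))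
      (fun x hx => hgd x (by rw [huIcc] at hx; exact hx.1))
      (by rw [huIcc]
          exact (hb_cont.comp_continuousOn (hgc.mono Set.Icc_subset_Ici_self)).add
            continuousOn_const)
      (by refine ContinuousOn.div (hf_cont.mono himg)
            ((hb_cont.continuousOn).add continuousOn_const) ?_
          rintro y ⟨u, hu, rfl⟩
          rw [huIcc] at hu
          exact (hpos u hu.1).ne')
  rw [hg0] at key
  rw [← key]
  apply intervalIntegral.integral_congr
  intro u hu
  rw [huIcc] at hu
  have h1 := hpos u hu.1
  simp only [Function.comp, smul_eq_mul]
  field_simp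

lemma support_eq (hb_cont : Continuous b)
    (hpos : ∀ t ≥ (0:ℝ), 0 < b (g t) + a)
    (hg0 : g 0 = 0)
    (hgd : ∀ t ≥ (0:ℝ), HasDerivAt g (b (g t) + a) t) :
    supportSet b a = g '' Set.Ici 0 := by
  have hgc := flow_contOn hgd
  have hnn := flow_nonneg hpos hg0 hgd
  ext x
  constructor
  · rintro ⟨hx0, hxall⟩
    by_contra hnot
    have hlt : ∀ t ≥ (0:ℝ), g t < x := by
      intro t ht
      by_contra hge
      push_neg at hge
      have hx' : x ∈ g '' Set.Icc 0 t := by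
        apply intermediate_value_Icc ht (hgc.mono Set.Icc_subset_Ici_self)
        exact ⟨by rw [hg0]; exact hx0, hge⟩
      obtain ⟨s, hs, hsx⟩ := hx'
      exact hnot ⟨s, hs.1, hsx⟩
    obtain ⟨y₀, hy₀mem, hy₀⟩ := isCompact_Icc.exists_isMinOn (Set.nonempty_Icc.mpr hx0)
      ((hb_cont.continuousOn).add (continuousOn_const (c := a)))
    set ε := b y₀ + a with hεdef
    have hε : 0 < ε := hxall y₀ hy₀mem
    have hmono : MonotoneOn (fun t => g t - ε * t) (Set.Ici 0) := by
      have hc2 : ContinuousOn (fun t : ℝ => g t - ε * t) (Set.Ici 0) :=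
        (flow_contOn hgd).sub (Continuous.continuousOn (by continuity))
      have hd : ∀ u : ℝ, 0 < u → HasDerivAt (fun t => g t - ε * t) (b (g u) + a - ε) u := by
        intro u hu
        simpa using (hgd u hu.le).fun_sub ((hasDerivAt_id u).const_mul ε)
      refine monotoneOn_of_deriv_nonneg (convex_Ici 0) hc2 ?_ ?_
      · intro u hu
        rw [interior_Ici] at hu
        exact (hd u hu).differentiableAt.differentiableWithinAt
      intro u hu
      rw [interior_Ici] at hu
      rw [(hd u hu).deriv]
      have hmem' : g u ∈ Set.Icc 0 x := ⟨hnn u hu.le, (hlt u hu.le).le⟩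
      have hmin : b y₀ + a ≤ b (g u) + a := hy₀ hmem'
      linarith [hmin, hεdef]
    set T := (x + 1) / ε with hTdef
    have hT : (0:ℝ) ≤ T := div_nonneg (by linarith) hε.le
    have h2 := hmono Set.self_mem_Ici hT hT
    simp only [hg0, mul_zero, sub_zero] at h2
    have hεT : ε * T = x + 1 := by
      rw [hTdef, mul_div_cancel₀ _ hε.ne']
    have := hlt T hT
    -- h2 : 0 - 0 ≤ g T - ε * T
    have : x + 1 ≤ g T := by
      have := h2
      linarith [hεT ▸ this]
    linarith [hlt T hT]
  · rintro ⟨t, ht, rfl⟩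
    refine ⟨hnn t ht, ?_⟩
    intro y hy
    have hy' : y ∈ g '' Set.Icc 0 t := by
      apply intermediate_value_Icc ht (hgc.mono Set.Icc_subset_Ici_self)
      exact ⟨by rw [hg0]; exact hy.1, hy.2⟩
    obtain ⟨s, hs, rfl⟩ := hy'
    exact hpos s hs.1

lemma main_id {f : ℝ → ℝ} (hf_cont : ContinuousOn f (Set.Ici 0))
    (hb_cont : Continuous b)
    (hpos : ∀ t ≥ (0:ℝ), 0 < b (g t) + a)
    (hg0 : g 0 = 0)
    (hgd : ∀ t ≥ (0:ℝ), HasDerivAt g (b (g t) + a) t) :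
    ∫ x in supportSet b a, invDensityBase b f a x
      = ∫ t in Set.Ioi (0:ℝ), Real.exp (-∫ u in (0:ℝ)..t, f (g u)) := by
  have hsupp : supportSet b a = g '' Set.Ici 0 := support_eq hb_cont hpos hg0 hgd
  have hinj : Set.InjOn g (Set.Ioi 0) :=
    ((flow_strictMono hpos hgd).injOn).mono Set.Ioi_subset_Ici_self
  rw [hsupp, ← Set.Ioi_insert, Set.image_insert_eq,
    setIntegral_congr_set (insert_ae_eq_self (g 0) _),
    MeasureTheory.integral_image_eq_integral_abs_deriv_smul measurableSet_Ioi
      (fun x hx => (hgd x (le_of_lt hx)).hasDerivWithinAt) hinj]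
  refine setIntegral_congr_fun measurableSet_Ioi ?_
  intro t ht
  have ht' : (0:ℝ) ≤ t := (Set.mem_Ioi.mp ht).le
  have h1 := hpos t ht'
  simp only [invDensityBase, smul_eq_mul, abs_of_pos h1]
  rw [inner_subst hf_cont hb_cont hpos hg0 hgd ht']
  rw [mul_inv_cancel_left₀ h1.ne']

lemma exp_integrable {f : ℝ → ℝ} (hf_cont : ContinuousOn f (Set.Ici 0))
    (hf_mono : StrictMonoOn f (Set.Ici 0)) (hf0 : f 0 = 0)
    (hpos : ∀ t ≥ (0:ℝ), 0 < b (g t) + a)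
    (hg0 : g 0 = 0)
    (hgd : ∀ t ≥ (0:ℝ), HasDerivAt g (b (g t) + a) t) :
    IntegrableOn (fun t => Real.exp (-∫ u in (0:ℝ)..t, f (g u))) (Set.Ioi 0) := by
  have hgc := flow_contOn hgd
  have hnn := flow_nonneg hpos hg0 hgd
  have hfg : ContinuousOn (fun u => f (g u)) (Set.Ici 0) :=
    hf_cont.comp hgc (fun u hu => hnn u hu)
  have hII : ∀ s t : ℝ, 0 ≤ s → s ≤ t →
      IntervalIntegrable (fun u => f (g u)) volume s t := by
    intro s t hs hst
    apply ContinuousOn.intervalIntegrable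
    refine hfg.mono ?_
    rw [Set.uIcc_of_le hst]
    exact fun z hz => le_trans hs hz.1
  have hP : ContinuousOn (fun t => ∫ u in (0:ℝ)..t, f (g u)) (Set.Ici 0) := by
    intro t₀ ht₀
    have ht₀' : (0:ℝ) ≤ t₀ := ht₀
    have h1 : ContinuousOn (fun t => ∫ u in (0:ℝ)..t, f (g u)) (Set.Icc 0 (t₀+1)) := by
      have h2 := intervalIntegral.continuousOn_primitive_interval (a := (0:ℝ)) (b := t₀+1)
        (μ := volume) (f := fun u => f (g u)) ?_
      · rwa [Set.uIcc_of_le (by linarith : (0:ℝ) ≤ t₀+1)] at h2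
      · rw [Set.uIcc_of_le (by linarith : (0:ℝ) ≤ t₀+1)]
        exact (hfg.mono (fun z hz => hz.1)).integrableOn_Icc
    have h3 : Set.Icc (0:ℝ) (t₀+1) ∈ nhdsWithin t₀ (Set.Ici 0) := by
      rw [← Set.Ici_inter_Iic]
      exact Filter.inter_mem self_mem_nhdsWithin
        (mem_nhdsWithin_of_mem_nhds (Iic_mem_nhds (by linarith)))
    exact (h1 t₀ ⟨ht₀', by linarith⟩).mono_of_mem_nhdsWithin h3
  have hFc : ContinuousOn (fun t => Real.exp (-∫ u in (0:ℝ)..t, f (g u))) (Set.Ici 0) :=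
    Real.continuous_exp.comp_continuousOn hP.neg
  have hmeas : AEStronglyMeasurable (fun t => Real.exp (-∫ u in (0:ℝ)..t, f (g u)))
      (volume.restrict (Set.Ioi 0)) :=
    (hFc.mono Set.Ioi_subset_Ici_self).aestronglyMeasurable measurableSet_Ioi
  set c := f (g 1) with hcdef
  have hg1 : (0:ℝ) < g 1 := by
    have := flow_strictMono hpos hgd (Set.self_mem_Ici) (by norm_num : (1:ℝ) ∈ Set.Ici 0)
      one_pos
    rwa [hg0] at this
  have hc : 0 < c := by
    rw [hcdef, ← hf0]
    exact hf_mono Set.self_mem_Ici (Set.mem_Ici.mpr (hnn 1 zero_le_one)) hg1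
  have hnonneg : ∀ u : ℝ, 0 ≤ u → 0 ≤ f (g u) := by
    intro u hu
    rw [← hf0]
    exact hf_mono.monotoneOn Set.self_mem_Ici (Set.mem_Ici.mpr (hnn u hu)) (hnn u hu)
  have hlow : ∀ t : ℝ, 0 ≤ t → c * (t - 1) ≤ ∫ u in (0:ℝ)..t, f (g u) := by
    intro t ht
    rcases le_total t 1 with h1 | h1
    · have h2 : 0 ≤ ∫ u in (0:ℝ)..t, f (g u) :=
        intervalIntegral.integral_nonneg ht (fun u hu => hnonneg u hu.1)
      nlinarith
    · have hsplit := intervalIntegral.integral_add_adjacent_intervals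
        (hII 0 1 le_rfl zero_le_one) (hII 1 t zero_le_one h1)
      have h2 : 0 ≤ ∫ u in (0:ℝ)..1, f (g u) :=
        intervalIntegral.integral_nonneg zero_le_one (fun u hu => hnonneg u hu.1)
      have h3 : ∫ _u in (1:ℝ)..t, c ≤ ∫ u in (1:ℝ)..t, f (g u) := by
        refine intervalIntegral.integral_mono_on h1 intervalIntegrable_const
          (hII 1 t zero_le_one h1) ?_
        intro u hu
        have hu0 : (0:ℝ) ≤ u := le_trans zero_le_one hu.1
        rw [hcdef]
        refine hf_mono.monotoneOn (Set.mem_Ici.mpr (hnn 1 zero_le_one))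
          (Set.mem_Ici.mpr (hnn u hu0)) ?_
        exact (flow_strictMono hpos hgd).monotoneOn (by norm_num) (Set.mem_Ici.mpr hu0) hu.1
      rw [intervalIntegral.integral_const, smul_eq_mul] at h3
      linarith [hsplit, h2, h3]
  have hdom : IntegrableOn (fun t => Real.exp c * Real.exp (-(c * t))) (Set.Ioi 0) := by
    have h0 := exp_neg_integrableOn_Ioi 0 hc
    simp_rw [neg_mul] at h0
    exact h0.const_mul (Real.exp c)
  refine hdom.mono' hmeas ?_
  rw [ae_restrict_iff' measurableSet_Ioi]
  refine Filter.Eventually.of_forall (fun t ht => ?_)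
  have ht' : (0:ℝ) ≤ t := (Set.mem_Ioi.mp ht).le
  rw [Real.norm_eq_abs, abs_of_pos (Real.exp_pos _), ← Real.exp_add]
  apply Real.exp_le_exp.mpr
  have := hlow t ht'
  linarith

lemma flow_mono_param {a₁ a₂ : ℝ} {g₁ g₂ : ℝ → ℝ} (h12 : a₁ < a₂)
    (hg₁0 : g₁ 0 = 0) (hg₂0 : g₂ 0 = 0)
    (hg₁d : ∀ t ≥ (0:ℝ), HasDerivAt g₁ (b (g₁ t) + a₁) t)
    (hg₂d : ∀ t ≥ (0:ℝ), HasDerivAt g₂ (b (g₂ t) + a₂) t) :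
    ∀ t ≥ (0:ℝ), g₁ t ≤ g₂ t := by
  by_contra hcon
  push_neg at hcon
  obtain ⟨τ, hτ0, hτ⟩ := hcon
  set h : ℝ → ℝ := fun t => g₂ t - g₁ t with hhdef
  have hhc : ContinuousOn h (Set.Ici 0) := (flow_contOn hg₂d).sub (flow_contOn hg₁d)
  set Z := Set.Icc 0 τ ∩ h ⁻¹' {0} with hZdef
  have hZc : IsClosed Z :=
    (hhc.mono Set.Icc_subset_Ici_self).preimage_isClosed_of_isClosed isClosed_Icc
      isClosed_singleton
  have hZne : Z.Nonempty := ⟨0, ⟨le_rfl, hτ0⟩, by simp [hhdef, hg₁0, hg₂0]⟩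
  have hZbdd : BddAbove Z := ⟨τ, fun t ht => ht.1.2⟩
  set t₀ := sSup Z with ht₀def
  have hmem : t₀ ∈ Z := hZc.csSup_mem hZne hZbdd
  have ht₀0 : 0 ≤ t₀ := hmem.1.1
  have hτneg : h τ < 0 := sub_neg.mpr hτ
  have ht₀τ : t₀ < τ := by
    rcases lt_or_eq_of_le hmem.1.2 with h' | h'
    · exact h'
    · exfalso
      have h2 : h t₀ = 0 := hmem.2
      rw [h'] at h2
      linarith
  have heq : g₂ t₀ = g₁ t₀ := by
    have h2 : h t₀ = 0 := hmem.2
    simpa [hhdef, sub_eq_zero] using h2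
  have hd : HasDerivAt h (a₂ - a₁) t₀ := by
    have h2 := (hg₂d t₀ ht₀0).sub (hg₁d t₀ ht₀0)
    have h3 : b (g₂ t₀) + a₂ - (b (g₁ t₀) + a₁) = a₂ - a₁ := by rw [heq]; ring
    rw [h3] at h2
    exact h2
  have hslope' : Filter.Tendsto (slope h t₀) (𝓝[>] t₀) (𝓝 (a₂ - a₁)) :=
    (hasDerivAt_iff_tendsto_slope.mp hd).mono_left
      (nhdsWithin_mono t₀ (fun x hx => ne_of_gt hx))
  have hev1 : ∀ᶠ t in 𝓝[>] t₀, 0 < slope h t₀ t :=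
    hslope'.eventually (eventually_gt_nhds (by linarith))
  have hev2 : ∀ᶠ t in 𝓝[>] t₀, t ∈ Set.Ioc t₀ τ :=
    eventually_mem_nhdsWithin.mono (fun x hx => hx) |>.mp (Filter.eventually_of_mem (Ioc_mem_nhdsGT ht₀τ) (fun x hx _ => hx))
  obtain ⟨t, hts, htmem⟩ := (hev1.and hev2).exists
  have h1 : 0 < t - t₀ := sub_pos.mpr htmem.1
  have hht : 0 < h t := by
    rw [slope_def_field] at hts
    have h2 := mul_pos hts h1
    rw [div_mul_cancel₀ _ h1.ne'] at h2
    have h3 : h t₀ = 0 := hmem.2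
    linarith
  have htτ : t < τ := by
    rcases lt_or_eq_of_le htmem.2 with h' | h'
    · exact h'
    · exfalso; rw [h'] at hht; linarith
  have hsub : Set.Icc t τ ⊆ Set.Ici 0 := fun z hz =>
    le_trans (le_trans ht₀0 htmem.1.le) hz.1
  have h0mem : (0:ℝ) ∈ Set.Icc (h τ) (h t) := ⟨hτneg.le, hht.le⟩
  obtain ⟨z, hz, hz0⟩ := intermediate_value_Icc' htτ.le (hhc.mono hsub) h0mem
  have hzZ : z ∈ Z := ⟨⟨le_trans (le_trans ht₀0 htmem.1.le) hz.1, hz.2⟩, hz0⟩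
  have := le_csSup hZbdd hzZ
  linarith [htmem.1, hz.1]

end Aux

theorem gammaConst_inv_eq_integral_and_monotone
    (b f : ℝ → ℝ) (Cb : ℝ)
    (hb_lip : LocallyLipschitz b) (hb0 : 0 < b 0)
    (hb_bound : ∀ x ≥ (0:ℝ), b x ≤ Cb)
    (hf_cont : ContinuousOn f (Set.Ici 0))
    (hf_mono : StrictMonoOn f (Set.Ici 0))
    (hf0 : f 0 = 0)
    (φ : ℝ → ℝ → ℝ)  -- φ a t : flow of x' = b(x) + a at time t, started at 0
    (hφ_init : ∀ a ≥ (0:ℝ), φ a 0 = 0)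
    (hφ_deriv : ∀ a ≥ (0:ℝ), ∀ t ≥ (0:ℝ), HasDerivAt (φ a) (b (φ a t) + a) t) :
    (∀ a ≥ (0:ℝ), (gammaConst b f a)⁻¹ =
      ∫ t in Set.Ioi (0:ℝ), Real.exp (-∫ u in (0:ℝ)..t, f (φ a u))) ∧
    (∀ a₁ a₂ : ℝ, 0 ≤ a₁ → a₁ ≤ a₂ → gammaConst b f a₁ ≤ gammaConst b f a₂) := by
  have key : ∀ a ≥ (0:ℝ), (∫ x in supportSet b a, invDensityBase b f a x) =
      ∫ t in Set.Ioi (0:ℝ), Real.exp (-∫ u in (0:ℝ)..t, f (φ a u)) := by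
    intro a ha
    have hpos := flow_pos hb_lip hb0 ha (hφ_init a ha) (hφ_deriv a ha)
    exact main_id hf_cont hb_lip.continuous hpos (hφ_init a ha) (hφ_deriv a ha)
  constructor
  · intro a ha
    rw [gammaConst, inv_inv]
    exact key a ha
  · intro a₁ a₂ h1 h12
    have h2 : (0:ℝ) ≤ a₂ := le_trans h1 h12
    have hγ : ∀ a, 0 ≤ a → gammaConst b f a =
        (∫ t in Set.Ioi (0:ℝ), Real.exp (-∫ u in (0:ℝ)..t, f (φ a u)))⁻¹ := by
      intro a ha
      rw [gammaConst, key a ha]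
    rcases eq_or_lt_of_le h12 with rfl | hlt
    · exact le_rfl
    have hpos₁ := flow_pos hb_lip hb0 h1 (hφ_init a₁ h1) (hφ_deriv a₁ h1)
    have hpos₂ := flow_pos hb_lip hb0 h2 (hφ_init a₂ h2) (hφ_deriv a₂ h2)
    have hnn₁ := flow_nonneg hpos₁ (hφ_init a₁ h1) (hφ_deriv a₁ h1)
    have hnn₂ := flow_nonneg hpos₂ (hφ_init a₂ h2) (hφ_deriv a₂ h2)
    have hint₁ := exp_integrable hf_cont hf_mono hf0 hpos₁ (hφ_init a₁ h1) (hφ_deriv a₁ h1)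
    have hint₂ := exp_integrable hf_cont hf_mono hf0 hpos₂ (hφ_init a₂ h2) (hφ_deriv a₂ h2)
    have hle := flow_mono_param hlt (hφ_init a₁ h1) (hφ_init a₂ h2)
      (hφ_deriv a₁ h1) (hφ_deriv a₂ h2)
    have hII : ∀ (a : ℝ), 0 ≤ a → ∀ t : ℝ, 0 ≤ t →
        IntervalIntegrable (fun u => f (φ a u)) MeasureTheory.volume 0 t := by
      intro a ha t ht
      apply ContinuousOn.intervalIntegrable
      have hfg : ContinuousOn (fun u => f (φ a u)) (Set.Ici 0) :=
        hf_cont.comp (flow_contOn (hφ_deriv a ha))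
          (fun u hu => flow_nonneg (flow_pos hb_lip hb0 ha (hφ_init a ha) (hφ_deriv a ha))
            (hφ_init a ha) (hφ_deriv a ha) u hu)
      refine hfg.mono ?_
      rw [Set.uIcc_of_le ht]
      exact fun z hz => hz.1
    have hFle : ∀ t ∈ Set.Ioi (0:ℝ),
        Real.exp (-∫ u in (0:ℝ)..t, f (φ a₂ u)) ≤
          Real.exp (-∫ u in (0:ℝ)..t, f (φ a₁ u)) := by
      intro t ht
      have ht' : (0:ℝ) ≤ t := (Set.mem_Ioi.mp ht).le
      apply Real.exp_le_exp.mpr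
      apply neg_le_neg
      refine intervalIntegral.integral_mono_on ht' (hII a₁ h1 t ht') (hII a₂ h2 t ht') ?_
      intro u hu
      exact hf_mono.monotoneOn (Set.mem_Ici.mpr (hnn₁ u hu.1)) (Set.mem_Ici.mpr (hnn₂ u hu.1))
        (hle u hu.1)
    have hI : (∫ t in Set.Ioi (0:ℝ), Real.exp (-∫ u in (0:ℝ)..t, f (φ a₂ u))) ≤
        ∫ t in Set.Ioi (0:ℝ), Real.exp (-∫ u in (0:ℝ)..t, f (φ a₁ u)) :=
      setIntegral_mono_on hint₂ hint₁ measurableSet_Ioi hFle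
    have hposI : 0 < ∫ t in Set.Ioi (0:ℝ), Real.exp (-∫ u in (0:ℝ)..t, f (φ a₂ u)) := by
      rw [setIntegral_pos_iff_support_of_nonneg_ae
        (Filter.Eventually.of_forall (fun t => (Real.exp_pos _).le)) hint₂]
      have hsupp : Function.support (fun t => Real.exp (-∫ u in (0:ℝ)..t, f (φ a₂ u)))
          = Set.univ := Set.eq_univ_iff_forall.mpr (fun t => Function.mem_support.mpr (Real.exp_pos _).ne')
      rw [hsupp, Set.univ_inter, Real.volume_Ioi]
      exact ENNReal.zero_lt_top
    rw [hγ a₁ h1, hγ a₂ h2]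
    exact inv_anti₀ hposI hI
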